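/- Stirling's formula: Γ(s+1) = (s/e)^s · √(2πs) · (1 + o(1)) as s → +∞, i.e., lim_{s→∞} Γ(s+1) / ((s/e)^s √(2πs)) = 1. -/

import Mathlib

set_option maxHeartbeats 1000000
open Real Filter Nat Topology


noncomputable def Fst (s : ℝ) : ℝ := (s / Real.exp 1) ^ s * Real.sqrt (2 * π * s)

lemma Fst_pos {s : ℝ} (hs : 0 < s) : 0 < Fst s := by
  unfold Fst
  have h1 : 0 < s / Real.exp 1 := div_pos hs (exp_pos 1)
  have h2 : 0 < 2 * π * s := by positivity
  positivity

lemma log_Fst {s : ℝ} (hs : 0 < s) : Real.log (Fst s) = s * (Real.log s - 1) + (1/2) * Real.log (2 * π * s) := by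
  unfold Fst
  have h1 : 0 < s / Real.exp 1 := div_pos hs (exp_pos 1)
  have h2 : 0 < 2 * π * s := by positivity
  rw [Real.log_mul (by positivity) (by positivity), Real.log_rpow h1,
    Real.log_div hs.ne' (exp_pos 1).ne', Real.log_exp, Real.log_sqrt h2.le]
  ring

lemma fact_div_Fst (n : ℕ) (hn : 1 ≤ n) : (n ! : ℝ) / Fst n = Stirling.stirlingSeq n / √π := by
  have hn0 : (0:ℝ) < n := by exact_mod_cast hn
  have hFn : Fst n = √π * (√(2 * n : ℝ) * ((n : ℝ) / exp 1) ^ n) := by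
    unfold Fst
    rw [← Real.rpow_natCast ((n:ℝ)/exp 1) n]
    have : 2 * π * (n:ℝ) = π * (2 * n) := by ring
    rw [this, Real.sqrt_mul pi_pos.le]
    ring
  rw [hFn, Stirling.stirlingSeq]
  have h1 : (0:ℝ) < √(2 * n : ℝ) := Real.sqrt_pos.2 (by positivity)
  have h2 : (0:ℝ) < ((n:ℝ) / exp 1) ^ n := by positivity
  have h3 : (0:ℝ) < √π := Real.sqrt_pos.2 pi_pos
  field_simp

-- convexity upper bound: log Γ(s+1) ≤ log n! + t log(n+1), t = s - n
lemma gamma_upper {s : ℝ} {n : ℕ} (hn : 1 ≤ n) (h1 : (n:ℝ) ≤ s) (h2 : s < (n:ℝ) + 1) :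
    Real.log (Real.Gamma (s+1)) ≤ Real.log (n !) + (s - n) * Real.log ((n:ℝ)+1) := by
  set t : ℝ := s - n with ht
  have ht0 : 0 ≤ t := by simp [ht]; linarith
  have ht1 : t ≤ 1 := by simp [ht]; linarith
  have hx : ((n:ℝ)+1) ∈ Set.Ioi (0:ℝ) := by
    simp; positivity
  have hy : ((n:ℝ)+2) ∈ Set.Ioi (0:ℝ) := by
    simp; positivity
  have hc := Real.convexOn_log_Gamma.2 hx hy (by linarith : (0:ℝ) ≤ 1 - t) ht0 (by ring)
  have hcomb : (1-t) • ((n:ℝ)+1) + t • ((n:ℝ)+2) = s + 1 := by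
    simp [smul_eq_mul]; ring
  rw [hcomb] at hc
  have hg1 : Real.Gamma ((n:ℝ)+1) = n ! := Real.Gamma_nat_eq_factorial n
  have hg2 : Real.Gamma ((n:ℝ)+2) = (n+1)! := by
    have : ((n:ℝ)+2) = ((n+1 : ℕ):ℝ) + 1 := by push_cast; ring
    rw [this, Real.Gamma_nat_eq_factorial]
  simp only [Function.comp_apply, smul_eq_mul, hg1, hg2] at hc
  have hfact : Real.log (((n+1)! : ℕ) : ℝ) = Real.log ((n:ℝ)+1) + Real.log (n !) := by
    rw [Nat.factorial_succ]
    push_cast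
    rw [Real.log_mul (by positivity) (by positivity : ((n !:ℕ):ℝ) ≠ 0)]
  rw [hfact] at hc
  calc Real.log (Real.Gamma (s+1)) ≤ (1-t) * Real.log (n !) + t * (Real.log ((n:ℝ)+1) + Real.log (n !)) := hc
    _ = Real.log (n !) + t * Real.log ((n:ℝ)+1) := by ring

-- convexity lower bound: log (n+1)! ≤ log Γ(s+1) + (1-t) log(s+1)
lemma gamma_lower {s : ℝ} {n : ℕ} (hn : 1 ≤ n) (h1 : (n:ℝ) ≤ s) (h2 : s < (n:ℝ) + 1) :
    Real.log ((n+1)!) ≤ Real.log (Real.Gamma (s+1)) + (1 - (s - n)) * Real.log (s+1) := by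
  set t : ℝ := s - n with ht
  have hn0 : (0:ℝ) < n := by exact_mod_cast hn
  have ht0 : 0 ≤ t := by simp [ht]; linarith
  have ht1 : t ≤ 1 := by simp [ht]; linarith
  have hs0 : 0 < s := by linarith
  have hx : (s+1) ∈ Set.Ioi (0:ℝ) := by simp; linarith
  have hy : (s+2) ∈ Set.Ioi (0:ℝ) := by simp; linarith
  have hc := Real.convexOn_log_Gamma.2 hx hy ht0 (by linarith : (0:ℝ) ≤ 1 - t) (by ring)
  have hcomb : t • (s+1) + (1-t) • (s+2) = (n:ℝ) + 2 := by
    simp [smul_eq_mul, ht]; ring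
  rw [hcomb] at hc
  have hg2 : Real.Gamma ((n:ℝ)+2) = (n+1)! := by
    have : ((n:ℝ)+2) = ((n+1 : ℕ):ℝ) + 1 := by push_cast; ring
    rw [this, Real.Gamma_nat_eq_factorial]
  have hGs : 0 < Real.Gamma (s+1) := Real.Gamma_pos_of_pos (by linarith)
  have hg3 : Real.Gamma (s+2) = (s+1) * Real.Gamma (s+1) := by
    have : s + 2 = (s+1) + 1 := by ring
    rw [this, Real.Gamma_add_one (by linarith : s + 1 ≠ 0)]
  simp only [Function.comp_apply, smul_eq_mul, hg2, hg3] at hc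
  rw [Real.log_mul (by linarith : s + 1 ≠ 0) hGs.ne'] at hc
  calc Real.log ((n+1)!) ≤ t * Real.log (Real.Gamma (s+1)) + (1-t) * (Real.log (s+1) + Real.log (Real.Gamma (s+1))) := hc
    _ = Real.log (Real.Gamma (s+1)) + (1-t) * Real.log (s+1) := by ring

lemma L_diff_upper {s : ℝ} {n : ℕ} (hn : 1 ≤ n) (h1 : (n:ℝ) ≤ s) (h2 : s < (n:ℝ)+1) :
    (s - n) * Real.log ((n:ℝ)+1)
      + ((n:ℝ)*(Real.log n - 1) + (1/2)*Real.log (2*π*(n:ℝ)))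
      - (s*(Real.log s - 1) + (1/2)*Real.log (2*π*s))
      ≤ Real.log (1 + 1/(n:ℝ)) + 1/(n:ℝ) := by
  have hn0 : (0:ℝ) < n := by exact_mod_cast hn
  have hs0 : (0:ℝ) < s := lt_of_lt_of_le hn0 h1
  set t : ℝ := s - n with ht
  have ht0 : 0 ≤ t := by simp [ht]; linarith
  have ht1 : t ≤ 1 := by simp [ht]; linarith
  set ln : ℝ := Real.log n with hln
  set ls : ℝ := Real.log s with hls
  set lm : ℝ := Real.log ((n:ℝ)+1) with hlm
  have lsplit_n : Real.log (2*π*(n:ℝ)) = Real.log (2*π) + ln := by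
    rw [hln, Real.log_mul (by positivity) hn0.ne']
  have lsplit_s : Real.log (2*π*s) = Real.log (2*π) + ls := by
    rw [hls, Real.log_mul (by positivity) hs0.ne']
  rw [lsplit_n, lsplit_s]
  have hmono : ln ≤ ls := Real.log_le_log hn0 h1
  have hls_le : ls ≤ lm := Real.log_le_log hs0 (by linarith)
  have hlog1 : Real.log (1 + 1/(n:ℝ)) = lm - ln := by
    rw [show (1:ℝ) + 1/(n:ℝ) = ((n:ℝ)+1)/n by field_simp,
      Real.log_div (by positivity) hn0.ne']
  have hsub : ln - ls ≤ (n:ℝ)/s - 1 := by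
    have := Real.log_le_sub_one_of_pos (show (0:ℝ) < (n:ℝ)/s by positivity)
    rwa [Real.log_div hn0.ne' hs0.ne'] at this
  -- piece A
  have pA : t * (lm - ls) ≤ lm - ln := by
    have hd0 : 0 ≤ lm - ls := by linarith
    calc t * (lm - ls) ≤ 1 * (lm - ls) := by nlinarith
      _ ≤ lm - ln := by linarith
  -- piece B
  have pB : t - (n:ℝ) * (ls - ln) ≤ 1/(n:ℝ) := by
    have step1 : t - (n:ℝ)*(ls - ln) ≤ t + (n:ℝ)*((n:ℝ)/s - 1) := by nlinarith
    have e1 : t + (n:ℝ)*((n:ℝ)/s - 1) = t*t/s := by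
      field_simp
      ring_nf
      rw [ht]; ring
    have e2 : t*t/s ≤ 1/(n:ℝ) := by
      rw [div_le_div_iff₀ hs0 hn0]
      have hst : s = (n:ℝ) + t := by rw [ht]; ring
      have hsq : t*t ≤ 1 := by nlinarith
      nlinarith [mul_nonneg (sub_nonneg.2 hsq) hn0.le]
    linarith
  rw [hlog1]
  nlinarith [pA, pB, hmono]

lemma L_diff_lower {s : ℝ} {n : ℕ} (hn : 1 ≤ n) (h1 : (n:ℝ) ≤ s) (h2 : s < (n:ℝ)+1) :
    -Real.log (1 + 1/((n:ℝ)+1)) - 1/(n:ℝ) ≤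
    (((n:ℝ)+1)*(Real.log ((n:ℝ)+1) - 1) + (1/2)*Real.log (2*π*((n:ℝ)+1)))
      - (1-(s-n))*Real.log (s+1)
      - (s*(Real.log s - 1) + (1/2)*Real.log (2*π*s)) := by
  have hn0 : (0:ℝ) < n := by exact_mod_cast hn
  have hs0 : (0:ℝ) < s := lt_of_lt_of_le hn0 h1
  set m : ℝ := (n:ℝ) + 1 with hm
  have hm0 : 0 < m := by positivity
  set u : ℝ := m - s with hu
  have hu0 : 0 ≤ u := by simp [hu]; linarith
  have hu1 : u ≤ 1 := by simp only [hu, hm]; linarith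
  set ls : ℝ := Real.log s with hls
  set lm : ℝ := Real.log m with hlm
  set lp : ℝ := Real.log (s+1) with hlp
  set lq : ℝ := Real.log (m+1) with hlq
  have lsplit_m : Real.log (2*π*m) = Real.log (2*π) + lm := by
    rw [hlm, Real.log_mul (by positivity) hm0.ne']
  have lsplit_s : Real.log (2*π*s) = Real.log (2*π) + ls := by
    rw [hls, Real.log_mul (by positivity) hs0.ne']
  rw [lsplit_m, lsplit_s]
  have hlog1 : Real.log (1 + 1/m) = lq - lm := by
    rw [hlq, hlm, show (1:ℝ) + 1/m = (m+1)/m by field_simp,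
      Real.log_div (by positivity) hm0.ne']
  rw [show (1:ℝ) + 1/((n:ℝ)+1) = 1 + 1/m from rfl, hlog1]
  clear_value m u ls lm lp lq
  -- d := lm - ls ≥ 0
  have hd0 : ls ≤ lm := by
    rw [hls, hlm]; exact Real.log_le_log hs0 h2.le
  -- m * (lm - ls) ≥ u  : from log(s/m) ≤ s/m - 1
  have f1 : u ≤ m * (lm - ls) := by
    have hh := Real.log_le_sub_one_of_pos (show (0:ℝ) < s/m by positivity)
    rw [Real.log_div hs0.ne' hm0.ne'] at hh
    have : m * (ls - lm) ≤ m * (s/m - 1) := by nlinarith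
    have e : m * (s/m - 1) = s - m := by field_simp
    nlinarith
  -- s * (lm - ls) ≤ u : from log(m/s) ≤ m/s - 1
  have f2 : s * (lm - ls) ≤ u := by
    have hh := Real.log_le_sub_one_of_pos (show (0:ℝ) < m/s by positivity)
    rw [Real.log_div hm0.ne' hs0.ne'] at hh
    have : s * (lm - ls) ≤ s * (m/s - 1) := by nlinarith
    have e : s * (m/s - 1) = m - s := by field_simp
    nlinarith
  -- piece 1 : s*(lm - ls) ≥ u - 1/n
  have p1 : u - 1/(n:ℝ) ≤ s * (lm - ls) := by
    have hd : 0 ≤ lm - ls := by linarith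
    have hms : s = m - u := by rw [hu]; ring
    -- n*(lm - ls) ≤ s*(lm-ls) ≤ u  so (lm - ls) ≤ u/n, and u*(lm-ls) ≤ 1/n
    have hnd : (n:ℝ) * (lm - ls) ≤ u := by nlinarith
    have hud : u * (lm - ls) ≤ 1/(n:ℝ) := by
      rw [le_div_iff₀ hn0]
      have c1 : u * (lm - ls) * n = u * ((n:ℝ) * (lm - ls)) := by ring
      have c2 : u * ((n:ℝ) * (lm - ls)) ≤ u * u :=
        mul_le_mul_of_nonneg_left hnd hu0
      have c3 : u * u ≤ 1 := by nlinarith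
      linarith [c1.le, c1.ge]
    -- s*(lm-ls) = m*(lm-ls) - u*(lm-ls) ≥ u - 1/n
    have c4 : s * (lm - ls) = m * (lm - ls) - u * (lm - ls) := by
      rw [hms]; ring
    linarith
  -- piece 2 : u*(lp - lm) ≤ lq - lm
  have p2 : u * (lp - lm) ≤ lq - lm := by
    have h1' : lm ≤ lp := by
      rw [hlm, hlp]; exact Real.log_le_log hm0 (by rw [hm]; linarith)
    have h2' : lp ≤ lq := by
      rw [hlp, hlq]; exact Real.log_le_log (by linarith) (by linarith)
    nlinarith
  -- algebra: goal is linear in the above after expanding m*lm - s*ls = s*(lm-ls) + u*lm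
  have expand : m*lm - s*ls = s*(lm - ls) + u*lm := by rw [hu]; ring
  have e3 : u * (lp - lm) = u * lp - u * lm := by ring
  have key : -(lq - lm) - 1/(n:ℝ) ≤ s*(lm - ls) + u*lm - u*lp - u + (1/2)*(lm - ls) := by
    linarith [p1, p2, hd0, e3]
  have goalEq : m*(lm-1) + 1/2*(Real.log (2*π) + lm) - (1 - (s - (n:ℝ)))*lp
      - (s*(ls-1) + 1/2*(Real.log (2*π)+ls))
      = s*(lm - ls) + u*lm - u*lp - u + (1/2)*(lm - ls) := by
    rw [hu, hm]; ring
  linarith [key, goalEq.le, goalEq.ge]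

lemma log_fact_div_Fst {n : ℕ} (hn : 1 ≤ n) :
    Real.log (Stirling.stirlingSeq n / √π) = Real.log (n !) - Real.log (Fst n) := by
  have hn0 : (0:ℝ) < n := by exact_mod_cast hn
  rw [← fact_div_Fst n hn, Real.log_div (by positivity) (Fst_pos hn0).ne']

lemma seq_log_stirling : Tendsto (fun n : ℕ => Real.log (Stirling.stirlingSeq n / √π)) atTop (𝓝 0) := by
  have h1 : Tendsto (fun n : ℕ => Stirling.stirlingSeq n / √π) atTop (𝓝 1) := by
    have h := Stirling.tendsto_stirlingSeq_sqrt_pi.div_const (√π)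
    simpa [div_self (Real.sqrt_pos.2 pi_pos).ne'] using h
  have h2 := (Real.continuousAt_log one_ne_zero).tendsto.comp h1
  simpa [Function.comp_def] using h2

lemma seq_log_one : Tendsto (fun n : ℕ => Real.log (1 + 1/(n:ℝ))) atTop (𝓝 0) := by
  have h1 : Tendsto (fun n : ℕ => 1 + 1/(n:ℝ)) atTop (𝓝 1) := by
    have := tendsto_one_div_atTop_nhds_zero_nat (𝕜 := ℝ)
    simpa using (tendsto_const_nhds (x := (1:ℝ)) (f := atTop)).add this
  have h2 := (Real.continuousAt_log one_ne_zero).tendsto.comp h1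
  simpa [Function.comp_def] using h2

theorem stmt_9 :
    Filter.Tendsto
      (fun s : ℝ => Real.Gamma (s + 1) /
        ((s / Real.exp 1) ^ s * Real.sqrt (2 * Real.pi * s)))
      Filter.atTop (nhds 1) := by
  have hinv : Tendsto (fun n : ℕ => 1/(n:ℝ)) atTop (𝓝 0) := tendsto_one_div_atTop_nhds_zero_nat
  -- upper bound function
  have hiT : Tendsto (fun s : ℝ => Real.log (Stirling.stirlingSeq ⌊s⌋₊ / √π)
      + Real.log (1 + 1/(⌊s⌋₊:ℝ)) + 1/(⌊s⌋₊:ℝ)) atTop (𝓝 0) := by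
    have hnat : Tendsto (fun n : ℕ => Real.log (Stirling.stirlingSeq n / √π)
        + Real.log (1 + 1/(n:ℝ)) + 1/(n:ℝ)) atTop (𝓝 0) := by
      simpa using (seq_log_stirling.add seq_log_one).add hinv
    exact hnat.comp (tendsto_nat_floor_atTop )
  -- lower bound function
  have loT : Tendsto (fun s : ℝ => Real.log (Stirling.stirlingSeq (⌊s⌋₊ + 1) / √π)
      - Real.log (1 + 1/((⌊s⌋₊:ℝ) + 1)) - 1/(⌊s⌋₊:ℝ)) atTop (𝓝 0) := by
    have hs1 : Tendsto (fun n : ℕ => Real.log (Stirling.stirlingSeq (n+1) / √π)) atTop (𝓝 0) :=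
      seq_log_stirling.comp (tendsto_add_atTop_nat 1)
    have ho1 : Tendsto (fun n : ℕ => Real.log (1 + 1/((n:ℝ)+1))) atTop (𝓝 0) := by
      have h := seq_log_one.comp (tendsto_add_atTop_nat 1)
      refine h.congr fun n => ?_
      simp only [Function.comp_apply]
      norm_num
    have hnat : Tendsto (fun n : ℕ => Real.log (Stirling.stirlingSeq (n+1) / √π)
        - Real.log (1 + 1/((n:ℝ)+1)) - 1/(n:ℝ)) atTop (𝓝 0) := by
      simpa using (hs1.sub ho1).sub hinv
    exact hnat.comp (tendsto_nat_floor_atTop)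
  -- squeeze the log difference
  have hlog : Tendsto (fun s : ℝ => Real.log (Real.Gamma (s+1)) - Real.log (Fst s)) atTop (𝓝 0) := by
    apply tendsto_of_tendsto_of_tendsto_of_le_of_le' loT hiT
    · -- lower bound eventually
      filter_upwards [eventually_ge_atTop (1:ℝ)] with s hs
      set n := ⌊s⌋₊ with hn'
      have hn : 1 ≤ n := Nat.le_floor (by exact_mod_cast hs)
      have hn0 : (0:ℝ) < n := by exact_mod_cast hn
      have h1 : (n:ℝ) ≤ s := Nat.floor_le (by linarith)
      have h2 : s < (n:ℝ) + 1 := Nat.lt_floor_add_one s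
      have hs0 : 0 < s := by linarith
      have hgl := gamma_lower hn h1 h2
      have hLd := L_diff_lower hn h1 h2
      have hfd := log_fact_div_Fst (n := n+1) (by omega)
      have hcast : ((n+1 : ℕ):ℝ) = (n:ℝ)+1 := by push_cast; ring
      rw [hcast] at hfd
      have hFs : Real.log (Fst s) = s*(Real.log s - 1) + (1/2)*Real.log (2*π*s) := log_Fst hs0
      have hFm : Real.log (Fst ((n:ℝ)+1)) = ((n:ℝ)+1)*(Real.log ((n:ℝ)+1) - 1)
          + (1/2)*Real.log (2*π*((n:ℝ)+1)) := log_Fst (by positivity)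
      rw [hfd, hFm]
      linarith [hgl, hLd, hFs.le, hFs.ge]
    · -- upper bound eventually
      filter_upwards [eventually_ge_atTop (1:ℝ)] with s hs
      set n := ⌊s⌋₊ with hn'
      have hn : 1 ≤ n := Nat.le_floor (by exact_mod_cast hs)
      have hn0 : (0:ℝ) < n := by exact_mod_cast hn
      have h1 : (n:ℝ) ≤ s := Nat.floor_le (by linarith)
      have h2 : s < (n:ℝ) + 1 := Nat.lt_floor_add_one s
      have hs0 : 0 < s := by linarith
      have hgu := gamma_upper hn h1 h2
      have hLd := L_diff_upper hn h1 h2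
      have hfd := log_fact_div_Fst hn
      have hFs : Real.log (Fst s) = s*(Real.log s - 1) + (1/2)*Real.log (2*π*s) := log_Fst hs0
      have hFn : Real.log (Fst n) = (n:ℝ)*(Real.log n - 1) + (1/2)*Real.log (2*π*(n:ℝ)) :=
        log_Fst hn0
      rw [hfd]
      linarith [hgu, hLd, hFs.le, hFs.ge, hFn.le, hFn.ge]
  -- conclude
  have hexp : Tendsto (fun s : ℝ => Real.exp (Real.log (Real.Gamma (s+1)) - Real.log (Fst s)))
      atTop (𝓝 1) := by
    simpa [Function.comp_def] using (Real.continuous_exp.tendsto 0).comp hlog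
  apply hexp.congr'
  filter_upwards [eventually_ge_atTop (1:ℝ)] with s hs
  have hs0 : (0:ℝ) < s := by linarith
  have hG : 0 < Real.Gamma (s+1) := Real.Gamma_pos_of_pos (by linarith)
  have hF := Fst_pos hs0
  rw [Real.exp_sub, Real.exp_log hG, Real.exp_log hF]
  rfl
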